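/- If a graph G is obtained from a graph H by a ΔY-transformation (replacing the edges of a triangle uvw of H by a new vertex y joined to u, v, w) and G contains K_6 as a minor, then H contains K_6 as a minor. -/

import Mathlib

open Set Topology

noncomputable section

universe u v

section Curves

variable {S : Type u} [TopologicalSpace S]

/-- A simple closed curve: the injective continuous image of a circle. -/
def IsSCC (γ : Set S) : Prop :=
  ∃ f : C(AddCircle (1 : ℝ), S), Function.Injective f ∧ Set.range f = γ

/-- A simple arc from `a` to `b`. -/
def IsArcFromTo (α : Set S) (a b : S) : Prop :=
  ∃ f : C(unitInterval, S), Function.Injective f ∧ Set.range f = α ∧ f 0 = a ∧ f 1 = b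

/-- A curve (set) separates the ambient space if its complement is disconnected. -/
def CurveSeparates (γ : Set S) : Prop := ¬ IsPreconnected (γᶜ)

/-- A simple closed curve is contractible (null-homotopic). -/
def CurveNullhomotopic (γ : Set S) : Prop :=
  ∃ f : C(AddCircle (1 : ℝ), S), Function.Injective f ∧ Set.range f = γ ∧
    ∃ p : S, f.Homotopic (ContinuousMap.const _ p)

/-- Two closed curves are freely homotopic. -/
def FreelyHomotopic (γ₁ γ₂ : Set S) : Prop :=
  ∃ f g : C(AddCircle (1 : ℝ), S), Set.range f = γ₁ ∧ Set.range g = γ₂ ∧ f.Homotopic g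

/-- An open disk in `S`. -/
def IsOpenDisk (D : Set S) : Prop := IsOpen D ∧ Nonempty (D ≃ₜ (ℝ × ℝ))

end Curves

/-- A (closed) surface: a compact connected Hausdorff space, locally homeomorphic to `ℝ²`. -/
def IsSurface (S : Type u) [TopologicalSpace S] : Prop :=
  CompactSpace S ∧ ConnectedSpace S ∧ T2Space S ∧
    ∀ x : S, ∃ U : Set S, IsOpen U ∧ x ∈ U ∧ Nonempty (U ≃ₜ (ℝ × ℝ))

/-- `S` is a topological sphere. -/
def IsSphere (S : Type u) [TopologicalSpace S] : Prop :=
  Nonempty (S ≃ₜ Metric.sphere (0 : EuclideanSpace ℝ (Fin 3)) 1)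

/-- `S` is a projective plane: the quotient of the 2-sphere by the antipodal identification. -/
def IsProjectivePlane (S : Type u) [TopologicalSpace S] : Prop :=
  Nonempty (S ≃ₜ Quot (fun x y : Metric.sphere (0 : EuclideanSpace ℝ (Fin 3)) 1 =>
    (x : EuclideanSpace ℝ (Fin 3)) = - (y : EuclideanSpace ℝ (Fin 3))))

/-- `H` is a minor of `G`: branch decomposition formulation. -/
def IsMinorOf {W : Type*} {V : Type*} (H : SimpleGraph W) (G : SimpleGraph V) : Prop :=
  ∃ f : W → Set V, (∀ w, (f w).Nonempty) ∧ (∀ w, (G.induce (f w)).Connected) ∧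
    (Pairwise fun w w' => Disjoint (f w) (f w')) ∧
    ∀ ⦃w w'⦄, H.Adj w w' → ∃ u ∈ f w, ∃ u' ∈ f w', G.Adj u u'

/-- `G` contains the complete graph `K₆` as a minor. -/
def HasK6Minor {V : Type*} (G : SimpleGraph V) : Prop :=
  IsMinorOf (SimpleGraph.completeGraph (Fin 6)) G

/-- `G` is 3-connected. -/
def IsThreeConnected {V : Type*} (G : SimpleGraph V) : Prop :=
  Nonempty (Fin 4 ↪ V) ∧ ∀ s : Set V, s.Finite → s.ncard < 3 → (G.induce sᶜ).Connected

/-- An embedding of a simple graph `G` into a topological space `S`: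
vertices are embedded injectively as points, edges as internally disjoint arcs. -/
structure GraphEmbedding (V : Type v) (G : SimpleGraph V) (S : Type u)
    [TopologicalSpace S] where
  vpos : V → S
  vpos_inj : Function.Injective vpos
  earc : Sym2 V → Set S
  earc_arc : ∀ u w : V, G.Adj u w → IsArcFromTo (earc s(u, w)) (vpos u) (vpos w)
  earc_vert : ∀ u w : V, G.Adj u w → earc s(u, w) ∩ Set.range vpos = {vpos u, vpos w}
  earc_disj : ∀ e e', e ∈ G.edgeSet → e' ∈ G.edgeSet → e ≠ e' →
    earc e ∩ earc e' ⊆ Set.range vpos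

namespace GraphEmbedding

variable {V : Type v} {G : SimpleGraph V} {S : Type u} [TopologicalSpace S]

/-- The point set of the embedded graph. -/
def carrier (E : GraphEmbedding V G S) : Set S :=
  Set.range E.vpos ∪ ⋃ e ∈ G.edgeSet, E.earc e

/-- The (open) faces of the embedding: connected components of the complement. -/
def IsFaceOf (E : GraphEmbedding V G S) (F : Set S) : Prop :=
  ∃ x, x ∉ E.carrier ∧ F = connectedComponentIn E.carrierᶜ x

/-- The boundary (facial walk, as a point set) of a face. -/
def wall (E : GraphEmbedding V G S) (F : Set S) : Set S := closure F \ F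

/-- Face-width: the minimum number of intersection points of a non-contractible
simple closed curve with the graph. -/
noncomputable def faceWidth (E : GraphEmbedding V G S) : ℕ∞ :=
  ⨅ γ ∈ {γ : Set S | IsSCC γ ∧ ¬ CurveNullhomotopic γ}, (γ ∩ E.carrier).encard

/-- Non-separating face-width: the minimum number of intersection points of a
surface non-separating simple closed curve with the graph. -/
noncomputable def nsFaceWidth (E : GraphEmbedding V G S) : ℕ∞ :=
  ⨅ γ ∈ {γ : Set S | IsSCC γ ∧ ¬ CurveSeparates γ}, (γ ∩ E.carrier).encard

/-- The point set of an embedded walk. -/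
def walkImage (E : GraphEmbedding V G S) {u w : V} (p : G.Walk u w) : Set S :=
  E.vpos '' {x | x ∈ p.support} ∪ ⋃ e ∈ p.edges, E.earc e

end GraphEmbedding

/-- An `(S₁, S₂)`-path in `G` with all vertices in `A`: meets `S₁` only in its first
vertex and `S₂` only in its last vertex. -/
def IsPathBetweenSets {V : Type v} (G : SimpleGraph V) (S1 S2 A : Set V)
    {u w : V} (p : G.Walk u w) : Prop :=
  p.IsPath ∧ u ∈ S1 ∧ w ∈ S2 ∧ (∀ x ∈ p.support, x ∈ A) ∧
    (∀ x ∈ p.support, x ∈ S1 → x = u) ∧ (∀ x ∈ p.support, x ∈ S2 → x = w)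

/-- There are `n` pairwise disjoint `(S₁,S₂)`-paths in `G` with vertices in `A`. -/
def DisjointPathFamily {V : Type v} (G : SimpleGraph V) (S1 S2 A : Set V) (n : ℕ) : Prop :=
  ∃ (u w : Fin n → V) (P : ∀ i, G.Walk (u i) (w i)),
    (∀ i, IsPathBetweenSets G S1 S2 A (P i)) ∧
    Pairwise fun i j => Disjoint {x | x ∈ (P i).support} {x | x ∈ (P j).support}

/-- `(A, B)` are the (vertex sets of the) two arcs of a cycle subgraph `C` obtained by
deleting the vertices `x` and `y`. -/
def IsArcPair {V : Type v} {G : SimpleGraph V} (C : G.Subgraph) (x y : V)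
    (A B : Set V) : Prop :=
  A ∪ B = C.verts \ {x, y} ∧ Disjoint A B ∧ (∀ a ∈ A, ∀ b ∈ B, ¬ C.Adj a b) ∧
    (A = ∅ ∨ (C.induce A).Connected) ∧ (B = ∅ ∨ (C.induce B).Connected)

/-- `dist_{(C,S)}(x,y) ≥ d`. -/
def CycDistGE {V : Type v} {G : SimpleGraph V} (C : G.Subgraph) (Sset : Set V)
    (x y : V) (d : ℕ) : Prop :=
  ∀ A B, IsArcPair C x y A B → (d : ℕ∞) ≤ (A ∩ Sset).encard ∧ (d : ℕ∞) ≤ (B ∩ Sset).encard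

/-- `dist_{(C,S)}(x,y) = 0`. -/
def CycDistEqZero {V : Type v} {G : SimpleGraph V} (C : G.Subgraph) (Sset : Set V)
    (x y : V) : Prop :=
  ∃ A B, IsArcPair C x y A B ∧ (A ∩ Sset = ∅ ∨ B ∩ Sset = ∅)

/-- The cylinder `S¹ × [0,1]`. -/
abbrev Cyl : Type := AddCircle (1 : ℝ) × unitInterval

def cuff0 : Set Cyl := {p | p.2 = 0}

def cuff1 : Set Cyl := {p | p.2 = 1}

/-- A ΔY-transformation: `G` is obtained from `H` by deleting the edges of the triangle
`uvw` and joining a new (previously isolated) vertex `y` to `u`, `v` and `w`. -/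
def IsDeltaY {V : Type v} (H G : SimpleGraph V) (u v w y : V) : Prop :=
  H.Adj u v ∧ H.Adj v w ∧ H.Adj u w ∧ (∀ z, ¬ H.Adj y z) ∧ y ∉ ({u, v, w} : Set V) ∧
    G = SimpleGraph.fromEdgeSet
      ((H.edgeSet \ {s(u, v), s(v, w), s(u, w)}) ∪ {s(y, u), s(y, v), s(y, w)})

/-- A face-chain of length `n`: an alternating sequence of vertices/edges
`x₀,…,xₙ` (given by their point sets) and faces `F₀,…,F_{n-1}`, with `xᵢ, xᵢ₊₁`
incident to `Fᵢ`. -/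
structure FaceChain {V : Type v} {G : SimpleGraph V} {S : Type u} [TopologicalSpace S]
    (E : GraphEmbedding V G S) (n : ℕ) where
  pts : Fin (n + 1) → Set S
  faces : Fin n → Set S
  faces_mem : ∀ i, E.IsFaceOf (faces i)
  pts_mem : ∀ j, (∃ x, pts j = {E.vpos x}) ∨ ∃ a b, G.Adj a b ∧ pts j = E.earc s(a, b)
  incid_left : ∀ i : Fin n, pts i.castSucc ⊆ closure (faces i)
  incid_right : ∀ i : Fin n, pts i.succ ⊆ closure (faces i)

namespace FaceChain

variable {V : Type v} {G : SimpleGraph V} {S : Type u} [TopologicalSpace S]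
  {E : GraphEmbedding V G S} {n : ℕ}

/-- The face-chain is closed: `x₀ = xₙ`. -/
def IsClosedChain (Λ : FaceChain E n) : Prop := Λ.pts 0 = Λ.pts (Fin.last n)

/-- `γ` is a realization of the closed curve `Γ(Λ)`. -/
def Realizes (Λ : FaceChain E n) (γ : Set S) : Prop :=
  IsSCC γ ∧ γ ⊆ (⋃ i, closure (Λ.faces i)) ∧ γ ∩ E.carrier ⊆ ⋃ j, Λ.pts j

/-- The face-chain is surface non-separating: some realization of `Γ(Λ)` is
surface non-separating. -/
def NonSep (Λ : FaceChain E n) : Prop := ∃ γ, Λ.Realizes γ ∧ ¬ CurveSeparates γ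

/-- `Λ` is a closed surface non-separating face-chain of minimum length among all
closed surface non-separating face-chains. -/
def MinimalNonSepClosed (Λ : FaceChain E n) : Prop :=
  Λ.IsClosedChain ∧ Λ.NonSep ∧
    ∀ (m : ℕ) (Λ' : FaceChain E m), Λ'.IsClosedChain → Λ'.NonSep → n ≤ m

end FaceChain

/-- `E'` (an embedding of `G'` in `S'`) is obtained from `E` (an embedding of `G` in `S`)
by cutting `S` along the curve `γ` and capping off the two resulting cuffs with disks. -/
structure CutCap {V V' : Type v} {S S' : Type u} [TopologicalSpace S] [TopologicalSpace S']
    {G : SimpleGraph V} {G' : SimpleGraph V'} (E : GraphEmbedding V G S) (γ : Set S)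
    (E' : GraphEmbedding V' G' S') where
  D₁ : Set S'
  D₂ : Set S'
  disk₁ : IsOpenDisk D₁
  disk₂ : IsOpenDisk D₂
  disj : Disjoint (closure D₁) (closure D₂)
  homeo : (γᶜ : Set S) ≃ₜ (((closure D₁ ∪ closure D₂)ᶜ : Set S'))
  graph_eq : E'.carrier = closure (Subtype.val '' (homeo '' (Subtype.val ⁻¹' E.carrier)))
  bdry : frontier D₁ ∪ frontier D₂ ⊆ E'.carrier

end

section DeltaYAux

open scoped Classical

variable {V : Type*} {H G : SimpleGraph V} {u v w y : V}

lemma deltaY_adj' (h : IsDeltaY H G u v w y) {a b : V} (ha : a ≠ y) (hb : b ≠ y)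
    (hab : G.Adj a b) : H.Adj a b := by
  obtain ⟨huv, hvw, huw, hiso, hy, rfl⟩ := h
  rw [SimpleGraph.fromEdgeSet_adj] at hab
  obtain ⟨hmem, hne⟩ := hab
  rcases hmem with ⟨h1, -⟩ | h2
  · exact (SimpleGraph.mem_edgeSet H).1 h1
  · simp only [Set.mem_insert_iff, Set.mem_singleton_iff, Sym2.eq_iff] at h2
    rcases h2 with (⟨h1,-⟩|⟨-,h1⟩)|(⟨h1,-⟩|⟨-,h1⟩)|(⟨h1,-⟩|⟨-,h1⟩) <;> simp_all

lemma deltaY_nbr' (h : IsDeltaY H G u v w y) {z : V} (hz : G.Adj y z) :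
    z = u ∨ z = v ∨ z = w := by
  obtain ⟨huv, hvw, huw, hiso, hy, rfl⟩ := h
  rw [SimpleGraph.fromEdgeSet_adj] at hz
  obtain ⟨hmem, hne⟩ := hz
  simp only [Set.mem_insert_iff, Set.mem_singleton_iff] at hy
  push_neg at hy
  rcases hmem with ⟨h1, -⟩ | h2
  · exact absurd ((SimpleGraph.mem_edgeSet H).1 h1) (hiso z)
  · simp only [Set.mem_insert_iff, Set.mem_singleton_iff, Sym2.eq_iff] at h2
    rcases h2 with (⟨-,h1⟩|⟨h1,-⟩)|(⟨-,h1⟩|⟨h1,-⟩)|(⟨-,h1⟩|⟨h1,-⟩) <;> simp_all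

lemma deltaY_tri' (h : IsDeltaY H G u v w y) {p q : V}
    (hp : p = u ∨ p = v ∨ p = w) (hq : q = u ∨ q = v ∨ q = w) (hpq : p ≠ q) :
    H.Adj p q := by
  obtain ⟨huv, hvw, huw, -, -, -⟩ := h
  rcases hp with rfl|rfl|rfl <;> rcases hq with rfl|rfl|rfl <;>
    first
      | exact absurd rfl hpq
      | exact huv | exact huv.symm | exact hvw | exact hvw.symm
      | exact huw | exact huw.symm

lemma deltaY_reach' (h : IsDeltaY H G u v w y) (s : Set V) (u₀ : V)
    (hu₀3 : u₀ = u ∨ u₀ = v ∨ u₀ = w)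
    (g : ↥s → ↥(s \ {y}))
    (hgdef : ∀ a : ↥s, (g a : V) = if (a : V) = y then u₀ else (a : V)) :
    ∀ (a b : ↥s), (G.induce s).Walk a b →
      (H.induce (s \ {y})).Reachable (g a) (g b) := by
  intro a b p
  induction p with
  | nil => exact SimpleGraph.Reachable.refl _
  | @cons x c d hadj p ih =>
    refine SimpleGraph.Reachable.trans ?_ ih
    have hxc : G.Adj (x : V) (c : V) := hadj
    by_cases hx : (x : V) = y
    · by_cases hc : (c : V) = y
      · exact absurd (hx.trans hc.symm) hxc.ne
      · have hc3 := deltaY_nbr' h (hx ▸ hxc)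
        by_cases hcu : (c : V) = u₀
        · have hxy : g x = g c := Subtype.ext (by
            rw [hgdef, hgdef, if_pos hx, if_neg hc, hcu])
          exact hxy ▸ SimpleGraph.Reachable.refl _
        · have hHa : H.Adj ((g x : V)) ((g c : V)) := by
            rw [hgdef, hgdef, if_pos hx, if_neg hc]
            exact deltaY_tri' h hu₀3 hc3 (fun e => hcu e.symm)
          exact SimpleGraph.Adj.reachable hHa
    · by_cases hc : (c : V) = y
      · have hx3 := deltaY_nbr' h (hc ▸ hxc.symm)
        by_cases hxu : (x : V) = u₀
        · have hxy : g x = g c := Subtype.ext (by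
            rw [hgdef, hgdef, if_neg hx, if_pos hc, hxu])
          exact hxy ▸ SimpleGraph.Reachable.refl _
        · have hHa : H.Adj ((g x : V)) ((g c : V)) := by
            rw [hgdef, hgdef, if_neg hx, if_pos hc]
            exact deltaY_tri' h hx3 hu₀3 hxu
          exact SimpleGraph.Adj.reachable hHa
      · have hHa : H.Adj ((g x : V)) ((g c : V)) := by
          rw [hgdef, hgdef, if_neg hx, if_neg hc]
          exact deltaY_adj' h hx hc hxc
        exact SimpleGraph.Adj.reachable hHa

end DeltaYAux

/-- A ΔY-transformation cannot create a K₆-minor. -/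
theorem stmt13 {V : Type*} (H G : SimpleGraph V) (u v w y : V)
    (h : IsDeltaY H G u v w y) (hG : HasK6Minor G) : HasK6Minor H := by
  classical
  obtain ⟨f, hne, hconn, hdisj, hadj⟩ := hG
  by_cases hycase : ∃ i, y ∈ f i
  case neg =>
    -- y is in no branch set: the same branch sets work in H
    push_neg at hycase
    refine ⟨f, hne, ?_, hdisj, ?_⟩
    · intro i
      refine (hconn i).mono ?_
      intro a b hab
      exact deltaY_adj' h (fun e => hycase i (e ▸ a.2)) (fun e => hycase i (e ▸ b.2)) hab
    · intro i j hij
      obtain ⟨a, ha, b, hb, hab⟩ := hadj hij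
      exact ⟨a, ha, b, hb,
        deltaY_adj' h (fun e => hycase i (e ▸ ha)) (fun e => hycase j (e ▸ hb)) hab⟩
  case pos =>
  obtain ⟨i₀, hyi₀⟩ := hycase
  have hyonly : ∀ j, j ≠ i₀ → y ∉ f j := fun j hj hyj =>
    Set.disjoint_left.mp (hdisj hj) hyj hyi₀
  -- the branch set of y is not just {y}
  have hbig : ∃ a ∈ f i₀, a ≠ y := by
    by_contra hno
    push_neg at hno
    have key : ∀ j ≠ i₀, ∃ b ∈ f j, (b = u ∨ b = v ∨ b = w) := by
      intro j hj
      obtain ⟨a, ha, b, hb, hab⟩ := hadj (show (SimpleGraph.completeGraph (Fin 6)).Adj i₀ j from hj.symm)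
      have hay : a = y := hno a ha
      exact ⟨b, hb, deltaY_nbr' h (hay ▸ hab)⟩
    have hdist : ∀ i : Fin 6, i+1 ≠ i ∧ i+2 ≠ i ∧ i+3 ≠ i ∧ i+4 ≠ i ∧
        i+1 ≠ i+2 ∧ i+1 ≠ i+3 ∧ i+1 ≠ i+4 ∧ i+2 ≠ i+3 ∧ i+2 ≠ i+4 ∧ i+3 ≠ i+4 := by
      decide
    obtain ⟨d1, d2, d3, d4, e12, e13, e14, e23, e24, e34⟩ := hdist i₀
    obtain ⟨b1, hb1, h1⟩ := key (i₀+1) d1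
    obtain ⟨b2, hb2, h2⟩ := key (i₀+2) d2
    obtain ⟨b3, hb3, h3⟩ := key (i₀+3) d3
    obtain ⟨b4, hb4, h4⟩ := key (i₀+4) d4
    have n12 : b1 ≠ b2 := fun e => Set.disjoint_left.mp (hdisj e12) hb1 (e ▸ hb2)
    have n13 : b1 ≠ b3 := fun e => Set.disjoint_left.mp (hdisj e13) hb1 (e ▸ hb3)
    have n14 : b1 ≠ b4 := fun e => Set.disjoint_left.mp (hdisj e14) hb1 (e ▸ hb4)
    have n23 : b2 ≠ b3 := fun e => Set.disjoint_left.mp (hdisj e23) hb2 (e ▸ hb3)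
    have n24 : b2 ≠ b4 := fun e => Set.disjoint_left.mp (hdisj e24) hb2 (e ▸ hb4)
    have n34 : b3 ≠ b4 := fun e => Set.disjoint_left.mp (hdisj e34) hb3 (e ▸ hb4)
    rcases h1 with rfl|rfl|rfl <;> rcases h2 with rfl|rfl|rfl <;>
      rcases h3 with rfl|rfl|rfl <;> rcases h4 with rfl|rfl|rfl <;>
      first
        | exact (n12 rfl).elim | exact (n13 rfl).elim | exact (n14 rfl).elim
        | exact (n23 rfl).elim | exact (n24 rfl).elim | exact (n34 rfl).elim
  obtain ⟨a₀, ha₀, ha₀y⟩ := hbig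
  -- find a neighbour u₀ of y inside f i₀
  have hne' : (⟨y, hyi₀⟩ : ↥(f i₀)) ≠ ⟨a₀, ha₀⟩ := fun e =>
    ha₀y (congrArg Subtype.val e).symm
  obtain ⟨p⟩ := (hconn i₀).preconnected ⟨y, hyi₀⟩ ⟨a₀, ha₀⟩
  have hpnil : ¬ p.Nil := SimpleGraph.Walk.not_nil_of_ne hne'
  set z : ↥(f i₀) := p.getVert 1 with hz
  have hadjz : (G.induce (f i₀)).Adj ⟨y, hyi₀⟩ z := p.adj_snd hpnil
  have hGyz : G.Adj y (z : V) := hadjz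
  have hu₀3 : (z : V) = u ∨ (z : V) = v ∨ (z : V) = w := deltaY_nbr' h hGyz
  have hu₀y : (z : V) ≠ y := fun e => hGyz.ne (e.symm)
  set u₀ : V := (z : V) with hu₀
  have hu₀mem : u₀ ∈ f i₀ \ {y} := ⟨z.2, hu₀y⟩
  -- the new branch sets
  set t : Set V := f i₀ \ {y} with ht
  set f' : Fin 6 → Set V := fun i => if i = i₀ then t else f i with hf'
  have hfppos : f' i₀ = t := if_pos rfl
  have hfpneg : ∀ j, j ≠ i₀ → f' j = f j := fun j hj => if_neg hj
  have hf'sub : ∀ i, f' i ⊆ f i := by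
    intro i x hx
    by_cases hii : i = i₀
    · subst hii; rw [hfppos] at hx; exact hx.1
    · rw [hfpneg i hii] at hx; exact hx
  have hf'noy : ∀ i, y ∉ f' i := by
    intro i hx
    by_cases hii : i = i₀
    · subst hii; rw [hfppos] at hx; exact hx.2 rfl
    · exact hyonly i hii (by rw [hfpneg i hii] at hx; exact hx)
  -- the map used for walk surgery
  have hg : ∀ a : ↥(f i₀), (if (a : V) = y then u₀ else (a : V)) ∈ f i₀ \ {y} := by
    intro a
    by_cases hay : (a : V) = y
    · rw [if_pos hay]; exact hu₀mem
    · rw [if_neg hay]; exact ⟨a.2, hay⟩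
  set g : ↥(f i₀) → ↥(f i₀ \ {y}) :=
    fun a => ⟨if (a : V) = y then u₀ else (a : V), hg a⟩ with hgd
  have hreach := deltaY_reach' h (f i₀) u₀ hu₀3 g (fun a => rfl)
  refine ⟨f', ?_, ?_, ?_, ?_⟩
  · intro i
    by_cases hii : i = i₀
    · subst hii; exact ⟨u₀, hfppos ▸ hu₀mem⟩
    · rw [hfpneg i hii]; exact hne i
  · intro i
    by_cases hii : i = i₀
    · subst hii
      rw [hfppos]
      rw [SimpleGraph.connected_iff]
      refine ⟨?_, ⟨⟨u₀, hu₀mem⟩⟩⟩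
      intro x₁ x₂
      have hx₁ : (x₁ : V) ∈ f i := x₁.2.1
      have hx₂ : (x₂ : V) ∈ f i := x₂.2.1
      obtain ⟨q⟩ := (hconn i).preconnected ⟨x₁, hx₁⟩ ⟨x₂, hx₂⟩
      have hr := hreach ⟨x₁, hx₁⟩ ⟨x₂, hx₂⟩ q
      have e₁ : g ⟨(x₁ : V), hx₁⟩ = x₁ := Subtype.ext (by
        simp only [hgd]; rw [if_neg (show (x₁ : V) ≠ y from x₁.2.2)])
      have e₂ : g ⟨(x₂ : V), hx₂⟩ = x₂ := Subtype.ext (by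
        simp only [hgd]; rw [if_neg (show (x₂ : V) ≠ y from x₂.2.2)])
      rwa [e₁, e₂] at hr
    · rw [hfpneg i hii]
      refine (hconn i).mono ?_
      intro a b hab
      exact deltaY_adj' h (fun e => hyonly i hii (e ▸ a.2)) (fun e => hyonly i hii (e ▸ b.2)) hab
  · intro i j hij
    exact ((hdisj hij).mono (hf'sub i) (hf'sub j))
  · intro i j hij
    obtain ⟨a, ha, b, hb, hab⟩ := hadj hij
    have hij' : i ≠ j := hij
    by_cases hay : a = y
    · -- then i = i₀
      have hii : i = i₀ := by
        by_contra hii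
        exact hyonly i hii (hay ▸ ha)
      subst hii
      have hby : b ≠ y := fun e => hab.ne (hay.trans e.symm)
      have hb3 := deltaY_nbr' h (hay ▸ hab)
      have hbj : b ∈ f' j := by rw [hfpneg j (Ne.symm hij')]; exact hb
      have hbu₀ : u₀ ≠ b := fun e =>
        Set.disjoint_left.mp (hdisj hij') hu₀mem.1 (e ▸ hb)
      exact ⟨u₀, hfppos ▸ hu₀mem, b, hbj, deltaY_tri' h hu₀3 hb3 hbu₀⟩
    · by_cases hby : b = y
      · have hjj : j = i₀ := by
          by_contra hjj
          exact hyonly j hjj (hby ▸ hb)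
        subst hjj
        have ha3 := deltaY_nbr' h (hby ▸ hab.symm)
        have hai : a ∈ f' i := by rw [hfpneg i hij']; exact ha
        have hau₀ : a ≠ u₀ := fun e =>
          Set.disjoint_left.mp (hdisj hij') ha (e ▸ hu₀mem.1)
        exact ⟨a, hai, u₀, hfppos ▸ hu₀mem, deltaY_tri' h ha3 hu₀3 hau₀⟩
      · refine ⟨a, ?_, b, ?_, deltaY_adj' h hay hby hab⟩
        · by_cases hii : i = i₀
          · subst hii; rw [hfppos]; exact ⟨ha, hay⟩
          · rw [hfpneg i hii]; exact ha
        · by_cases hjj : j = i₀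
          · subst hjj; rw [hfppos]; exact ⟨hb, hby⟩
          · rw [hfpneg j hjj]; exact hb
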